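/- Let (X,τ) be a compact metrizable topological space, d ∈ X(τ), and let G be a countable discrete group with a Følner sequence {F_n} acting continuously on X. For all α, ε ∈ (0,1): the function d_{α,ε} is a metric in X(τ); D(d, d_{α,ε}) < 2ε; and overline{mdim}_M(X,G,d_{α,ε}) = overline{mdim}_M(X,G,d)/α and underline{mdim}_M(X,G,d_{α,ε}) = underline{mdim}_M(X,G,d)/α (values taken in [0,∞], with ∞/α = ∞). -/

import Mathlib

open Filter Set Topology
open scoped ENNReal

namespace MeanDim13

/-- `d` is a metric on `X`. -/
def IsMetricOn {X : Type*} (d : X → X → ℝ) : Prop :=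
  (∀ x y, 0 ≤ d x y) ∧ (∀ x y, d x y = 0 ↔ x = y) ∧
    (∀ x y, d x y = d y x) ∧ ∀ x y z, d x z ≤ d x y + d y z

/-- `d` induces the given topology on `X`. -/
def InducesTopology {X : Type*} [TopologicalSpace X] (d : X → X → ℝ) : Prop :=
  ∀ (x : X) (s : Set X), s ∈ 𝓝 x ↔ ∃ ε > 0, {y : X | d x y < ε} ⊆ s

/-- `T` is a continuous (left) action of `G` on `X`. -/
def IsContAction {G X : Type*} [Group G] [TopologicalSpace X] (T : G → X → X) : Prop :=
  (∀ x : X, T 1 x = x) ∧ (∀ g h : G, ∀ x : X, T (g * h) x = T g (T h x)) ∧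
    ∀ g : G, Continuous (T g)

/-- The dynamical (Bowen) metric `d_F(x,y) = max_{g ∈ F} d(gx, gy)`. -/
noncomputable def dynDist {G X : Type*} (T : G → X → X) (d : X → X → ℝ)
    (F : Finset G) (x y : X) : ℝ :=
  if h : F.Nonempty then F.sup' h (fun g => d (T g x) (T g y)) else 0

/-- `K` is an `(F,ε)`-spanning subset of `E`. -/
def IsSpanningSet {G X : Type*} (T : G → X → X) (d : X → X → ℝ)
    (F : Finset G) (ε : ℝ) (E : Set X) (K : Finset X) : Prop :=
  ↑K ⊆ E ∧ ∀ x ∈ E, ∃ y ∈ K, dynDist T d F x y ≤ ε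

/-- `r_F(d,ε,E)`: minimal cardinality of an `(F,ε)`-spanning subset of `E`. -/
noncomputable def spanNum {G X : Type*} (T : G → X → X) (d : X → X → ℝ)
    (F : Finset G) (ε : ℝ) (E : Set X) : ℕ :=
  sInf {n : ℕ | ∃ K : Finset X, IsSpanningSet T d F ε E K ∧ K.card = n}

/-- The max-metric on the product. -/
def prodDist {X Y : Type*} (dX : X → X → ℝ) (dY : Y → Y → ℝ) (p q : X × Y) : ℝ :=
  max (dX p.1 q.1) (dY p.2 q.2)

/-- The diagonal action on the product. -/
def prodAction {G X Y : Type*} (T : G → X → X) (S : G → Y → Y) (g : G) (p : X × Y) : X × Y :=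
  (T g p.1, S g p.2)

/-- `{F n}` is a Følner sequence of nonempty finite subsets of `G`. -/
def IsFolner {G : Type*} [Group G] (Fs : ℕ → Finset G) : Prop :=
  letI := Classical.decEq G
  (∀ n, (Fs n).Nonempty) ∧
    ∀ g : G, Tendsto
      (fun n => (((Fs n) \ (Fs n).image (fun h => g * h)).card : ℝ) / ((Fs n).card : ℝ))
      atTop (𝓝 0)

/-- Upper metric mean dimension (via spanning numbers), w.r.t. a Følner sequence. -/
noncomputable def mdimMUpper {G X : Type*} (T : G → X → X) (d : X → X → ℝ)
    (Fs : ℕ → Finset G) (E : Set X) : ℝ≥0∞ :=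
  limsup (fun ε : ℝ =>
      (limsup (fun n =>
          ENNReal.ofReal (Real.log (spanNum T d (Fs n) ε E : ℝ) / ((Fs n).card : ℝ))) atTop)
        / ENNReal.ofReal |Real.log ε|) (𝓝[>] (0 : ℝ))

/-- Lower metric mean dimension (via spanning numbers), w.r.t. a Følner sequence. -/
noncomputable def mdimMLower {G X : Type*} (T : G → X → X) (d : X → X → ℝ)
    (Fs : ℕ → Finset G) (E : Set X) : ℝ≥0∞ :=
  liminf (fun ε : ℝ =>
      (limsup (fun n =>
          ENNReal.ofReal (Real.log (spanNum T d (Fs n) ε E : ℝ) / ((Fs n).card : ℝ))) atTop)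
        / ENNReal.ofReal |Real.log ε|) (𝓝[>] (0 : ℝ))


/-- The uniform distance `D(d₁,d₂) = sup_{x,y} |d₁(x,y) − d₂(x,y)|` between two metrics. -/
noncomputable def metrD {X : Type*} (d₁ d₂ : X → X → ℝ) : ℝ :=
  sSup {r : ℝ | ∃ x y : X, r = |d₁ x y - d₂ x y|}

/-- The deformed metric `d_{α,ε}`. -/
noncomputable def dAlphaEps {X : Type*} (d : X → X → ℝ) (α ε : ℝ) (x y : X) : ℝ :=
  if ε ≤ d x y then d x y else ε ^ (1 - α) * d x y ^ α

-- helpers to append after defs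
section Helpers
open scoped NNReal
set_option linter.unusedVariables false

variable {α ε : ℝ}

private lemma eps_split (hε : 0 < ε) : ε ^ (1-α) * ε ^ α = ε := by
  rw [← Real.rpow_add hε]; simp

private lemma rpow_add_le (a b : ℝ) (ha : 0 ≤ a) (hb : 0 ≤ b) (h0 : 0 ≤ α) (h1 : α ≤ 1) :
    (a + b) ^ α ≤ a ^ α + b ^ α := by
  have := NNReal.rpow_add_le_add_rpow a.toNNReal b.toNNReal h0 h1
  have hab : ((a.toNNReal + b.toNNReal : ℝ≥0) : ℝ) = a + b := by
    simp [Real.coe_toNNReal _ ha, Real.coe_toNNReal _ hb]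
  calc (a + b) ^ α = ((a.toNNReal + b.toNNReal : ℝ≥0) : ℝ) ^ α := by rw [hab]
    _ = ((a.toNNReal + b.toNNReal : ℝ≥0) ^ α : ℝ≥0) := by rw [NNReal.coe_rpow]
    _ ≤ ((a.toNNReal ^ α + b.toNNReal ^ α : ℝ≥0) : ℝ) := by exact_mod_cast this
    _ = a ^ α + b ^ α := by
        push_cast [NNReal.coe_rpow, Real.coe_toNNReal _ ha, Real.coe_toNNReal _ hb]; ring

private lemma F_nonneg (hα0 : 0 < α) (hε0 : 0 < ε) {t : ℝ} (ht : 0 ≤ t) :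
    0 ≤ (if ε ≤ t then t else ε ^ (1-α) * t ^ α) := by
  split
  · exact ht
  · positivity

private lemma F_lt_eps (hα0 : 0 < α) (hε0 : 0 < ε) {t : ℝ} (ht : 0 ≤ t) (htε : t < ε) :
    (if ε ≤ t then t else ε ^ (1-α) * t ^ α) < ε := by
  rw [if_neg (not_le.mpr htε)]
  calc ε ^ (1-α) * t ^ α < ε ^ (1-α) * ε ^ α := by
        apply mul_lt_mul_of_pos_left (Real.rpow_lt_rpow ht htε hα0)
        positivity
    _ = ε := eps_split hε0

private lemma F_ge_self (hα0 : 0 < α) (hα1 : α < 1) {t : ℝ} (ht : 0 ≤ t) :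
    t ≤ (if ε ≤ t then t else ε ^ (1-α) * t ^ α) := by
  split
  · exact le_rfl
  · rename_i h
    push_neg at h
    rcases eq_or_lt_of_le ht with h0 | h0
    · rw [← h0, Real.zero_rpow hα0.ne', mul_zero]
    · calc t = t ^ (1-α) * t ^ α := by rw [← Real.rpow_add h0]; simp
        _ ≤ ε ^ (1-α) * t ^ α := by
            apply mul_le_mul_of_nonneg_right (Real.rpow_le_rpow ht h.le (by linarith))
            positivity

private lemma F_eq_zero_iff (hα0 : 0 < α) (hε0 : 0 < ε) {t : ℝ} (ht : 0 ≤ t) :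
    (if ε ≤ t then t else ε ^ (1-α) * t ^ α) = 0 ↔ t = 0 := by
  split
  · rename_i h
    exact ⟨fun h' => h', fun h' => absurd (h'.symm ▸ h) (not_le.mpr hε0)⟩
  · rw [mul_eq_zero]
    constructor
    · rintro (h | h)
      · exact absurd h (ne_of_gt (Real.rpow_pos_of_pos hε0 _))
      · exact (Real.rpow_eq_zero ht hα0.ne').mp h
    · intro h'; subst h'; right; exact Real.zero_rpow hα0.ne'

private lemma F_le_iff (hα0 : 0 < α) (hε0 : 0 < ε) {t δ : ℝ} (ht : 0 ≤ t) (hδ0 : 0 < δ)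
    (hδε : δ < ε) :
    (if ε ≤ t then t else ε ^ (1-α) * t ^ α) ≤ δ ↔ t ≤ (δ / ε ^ (1-α)) ^ α⁻¹ := by
  have hb : (0:ℝ) < ε ^ (1-α) := Real.rpow_pos_of_pos hε0 _
  have hq0 : 0 ≤ δ / ε ^ (1-α) := by positivity
  have hgα : ((δ / ε ^ (1-α)) ^ α⁻¹) ^ α = δ / ε ^ (1-α) := Real.rpow_inv_rpow hq0 hα0.ne'
  have hglt : (δ / ε ^ (1-α)) ^ α⁻¹ < ε := by
    have h1 : δ / ε ^ (1-α) < ε ^ α := by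
      rw [div_lt_iff₀ hb, mul_comm, eps_split hε0]; exact hδε
    calc (δ / ε ^ (1-α)) ^ α⁻¹ < (ε ^ α) ^ α⁻¹ :=
          Real.rpow_lt_rpow hq0 h1 (by positivity)
      _ = ε := Real.rpow_rpow_inv hε0.le hα0.ne'
  constructor
  · intro h
    by_cases htε : ε ≤ t
    · rw [if_pos htε] at h; linarith
    · push_neg at htε
      rw [if_neg (not_le.mpr htε)] at h
      by_contra hcon
      push_neg at hcon
      have h2 : ((δ / ε ^ (1-α)) ^ α⁻¹) ^ α < t ^ α :=
        Real.rpow_lt_rpow (by positivity) hcon hα0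
      rw [hgα, div_lt_iff₀ hb] at h2
      nlinarith [mul_comm (t ^ α) (ε ^ (1-α))]
  · intro h
    have htε : t < ε := lt_of_le_of_lt h hglt
    rw [if_neg (not_le.mpr htε)]
    calc ε ^ (1-α) * t ^ α ≤ ε ^ (1-α) * ((δ / ε ^ (1-α)) ^ α⁻¹) ^ α :=
          mul_le_mul_of_nonneg_left (Real.rpow_le_rpow ht h hα0.le) hb.le
      _ = δ := by rw [hgα]; field_simp

section Metric
variable {X : Type*} (d : X → X → ℝ)

private lemma dAE_def (x y : X) :
    dAlphaEps d α ε x y = if ε ≤ d x y then d x y else ε ^ (1-α) * d x y ^ α := rfl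

private lemma dAE_isMetric (hd : IsMetricOn d) (hα : α ∈ Set.Ioo (0:ℝ) 1)
    (hε : ε ∈ Set.Ioo (0:ℝ) 1) : IsMetricOn (dAlphaEps d α ε) := by
  obtain ⟨hd0, hdeq, hdsymm, hdtri⟩ := hd
  obtain ⟨hα0, hα1⟩ := hα
  obtain ⟨hε0, hε1⟩ := hε
  refine ⟨fun x y => F_nonneg hα0 hε0 (hd0 x y), fun x y => ?_, fun x y => ?_, fun x y z => ?_⟩
  · rw [dAE_def, F_eq_zero_iff hα0 hε0 (hd0 x y), hdeq]
  · rw [dAE_def, dAE_def, hdsymm]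
  · rw [dAE_def, dAE_def, dAE_def]
    set a := d x y with ha
    set b := d y z with hb
    by_cases hxz : ε ≤ d x z
    · rw [if_pos hxz]
      calc d x z ≤ a + b := hdtri x y z
        _ ≤ _ := add_le_add (F_ge_self hα0 hα1 (hd0 x y)) (F_ge_self hα0 hα1 (hd0 y z))
    · push_neg at hxz
      rw [if_neg (not_le.mpr hxz)]
      have hFxz : ε ^ (1-α) * d x z ^ α < ε := by
        have := F_lt_eps hα0 hε0 (hd0 x z) hxz
        rwa [if_neg (not_le.mpr hxz)] at this
      by_cases hay : ε ≤ a
      · calc ε ^ (1-α) * d x z ^ α ≤ ε := hFxz.le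
          _ ≤ a := hay
          _ = (if ε ≤ a then a else ε ^ (1-α) * a ^ α) := by rw [if_pos hay]
          _ ≤ _ + (if ε ≤ b then b else ε ^ (1-α) * b ^ α) := by
              have := F_nonneg (ε := ε) hα0 hε0 (hd0 y z)
              linarith
      · by_cases hby : ε ≤ b
        · calc ε ^ (1-α) * d x z ^ α ≤ ε := hFxz.le
            _ ≤ b := hby
            _ = (if ε ≤ b then b else ε ^ (1-α) * b ^ α) := by rw [if_pos hby]
            _ ≤ _ := by
                have := F_nonneg (ε := ε) hα0 hε0 (hd0 x y)
                linarith
        · rw [if_neg hay, if_neg hby]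
          have h1 : d x z ^ α ≤ (a + b) ^ α :=
            Real.rpow_le_rpow (hd0 x z) (hdtri x y z) hα0.le
          have h2 : (a + b) ^ α ≤ a ^ α + b ^ α :=
            rpow_add_le a b (hd0 x y) (hd0 y z) hα0.le hα1.le
          have hb' : (0:ℝ) < ε ^ (1-α) := Real.rpow_pos_of_pos hε0 _
          nlinarith

private lemma dAE_inducesTopology [TopologicalSpace X] (hd : IsMetricOn d)
    (hc : InducesTopology d) (hα : α ∈ Set.Ioo (0:ℝ) 1) (hε : ε ∈ Set.Ioo (0:ℝ) 1) :
    InducesTopology (dAlphaEps d α ε) := by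
  obtain ⟨hα0, hα1⟩ := hα
  obtain ⟨hε0, hε1⟩ := hε
  obtain ⟨hd0, -, -, -⟩ := hd
  intro x s
  rw [hc x s]
  constructor
  · rintro ⟨δ, hδ0, hsub⟩
    refine ⟨δ, hδ0, fun y hy => ?_⟩
    apply hsub
    simp only [Set.mem_setOf_eq] at hy ⊢
    calc d x y ≤ dAlphaEps d α ε x y := F_ge_self hα0 hα1 (hd0 x y)
      _ < δ := hy
  · rintro ⟨δ, hδ0, hsub⟩
    set c := min δ ε with hc'
    have hc0 : 0 < c := lt_min hδ0 hε0
    have hcε : c ≤ ε := min_le_right _ _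
    have hbpos : (0:ℝ) < ε ^ (1-α) := Real.rpow_pos_of_pos hε0 _
    refine ⟨(c / ε ^ (1-α)) ^ α⁻¹, by positivity, fun y hy => ?_⟩
    apply hsub
    simp only [Set.mem_setOf_eq] at hy ⊢
    have hq0 : 0 ≤ c / ε ^ (1-α) := by positivity
    have hgα : ((c / ε ^ (1-α)) ^ α⁻¹) ^ α = c / ε ^ (1-α) := Real.rpow_inv_rpow hq0 hα0.ne'
    have hgle : (c / ε ^ (1-α)) ^ α⁻¹ ≤ ε := by
      have h1 : c / ε ^ (1-α) ≤ ε ^ α := by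
        rw [div_le_iff₀ hbpos, mul_comm, eps_split hε0]; exact hcε
      calc (c / ε ^ (1-α)) ^ α⁻¹ ≤ (ε ^ α) ^ α⁻¹ :=
            Real.rpow_le_rpow hq0 h1 (by positivity)
        _ = ε := Real.rpow_rpow_inv hε0.le hα0.ne'
    have hdxy : d x y < ε := lt_of_lt_of_le hy hgle
    rw [dAE_def, if_neg (not_le.mpr hdxy)]
    calc ε ^ (1-α) * d x y ^ α < ε ^ (1-α) * ((c / ε ^ (1-α)) ^ α⁻¹) ^ α := by
          apply mul_lt_mul_of_pos_left (Real.rpow_lt_rpow (hd0 x y) hy hα0) hbpos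
      _ = c := by rw [hgα]; field_simp
      _ ≤ δ := min_le_left _ _

private lemma dAE_metrD (hd : IsMetricOn d) (hα : α ∈ Set.Ioo (0:ℝ) 1)
    (hε : ε ∈ Set.Ioo (0:ℝ) 1) : metrD d (dAlphaEps d α ε) < 2 * ε := by
  obtain ⟨hα0, hα1⟩ := hα
  obtain ⟨hε0, hε1⟩ := hε
  obtain ⟨hd0, -, -, -⟩ := hd
  have h : metrD d (dAlphaEps d α ε) ≤ ε := by
    apply Real.sSup_le _ hε0.le
    rintro r ⟨x, y, rfl⟩
    by_cases h : ε ≤ d x y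
    · rw [dAE_def, if_pos h]
      simp [hε0.le]
    · push_neg at h
      have hge : d x y ≤ dAlphaEps d α ε x y := F_ge_self hα0 hα1 (hd0 x y)
      have hlt : dAlphaEps d α ε x y < ε := F_lt_eps hα0 hε0 (hd0 x y) h
      rw [abs_sub_comm, abs_of_nonneg (by linarith)]
      have := hd0 x y
      linarith
  linarith

end Metric
end Helpers

section Dyn
open scoped NNReal
set_option linter.unusedVariables false

variable {α ε : ℝ}

private lemma ennreal_div_le_mul_div {u B B' k : ℝ≥0∞} (hk0 : k ≠ 0) (hkt : k ≠ ⊤)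
    (hB' : B' ≤ k * B) : u / B ≤ k * (u / B') := by
  have h1 : B⁻¹ ≤ k * B'⁻¹ := by
    have h2 : (k * B)⁻¹ ≤ B'⁻¹ := ENNReal.inv_le_inv.mpr hB'
    calc B⁻¹ = (k * k⁻¹) * B⁻¹ := by rw [ENNReal.mul_inv_cancel hk0 hkt, one_mul]
      _ = k * (k * B)⁻¹ := by rw [ENNReal.mul_inv (Or.inl hk0) (Or.inl hkt)]; ring
      _ ≤ k * B'⁻¹ := mul_le_mul_right h2 k
  calc u / B = u * B⁻¹ := by rw [div_eq_mul_inv]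
    _ ≤ u * (k * B'⁻¹) := mul_le_mul_right h1 u
    _ = k * (u / B') := by rw [div_eq_mul_inv]; ring

private lemma ennreal_liminf_const_mul {β : Type*} {f : Filter β} {u : β → ℝ≥0∞} {a : ℝ≥0∞}
    (h0 : a ≠ 0) (ht : a ≠ ⊤) : f.liminf (fun x => a * u x) = a * f.liminf u := by
  let g := fun x : ℝ≥0∞ => a * x
  have hg_bij : Function.Bijective g :=
    Function.bijective_iff_has_inverse.mpr
      ⟨fun x => a⁻¹ * x,
        ⟨fun x => by simp [g, ← mul_assoc, ENNReal.inv_mul_cancel h0 ht], fun x => by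
          simp [g, ← mul_assoc, ENNReal.mul_inv_cancel h0 ht]⟩⟩
  have hg_mono : StrictMono g :=
    Monotone.strictMono_of_injective
      (fun _ _ h => by simpa using (ENNReal.mul_le_mul_iff_right h0 ht).mpr h) hg_bij.1
  let g_iso := StrictMono.orderIsoOfSurjective g hg_mono hg_bij.2
  exact (OrderIso.liminf_apply g_iso).symm

private lemma tendsto_coeff : Tendsto (fun n : ℕ => ENNReal.ofReal (1 + 1/((n:ℝ)+1)))
    atTop (𝓝 1) := by
  have h1 : Tendsto (fun n : ℕ => (1 + 1/((n:ℝ)+1))) atTop (𝓝 1) := by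
    have h0 := tendsto_one_div_add_atTop_nhds_zero_nat (𝕜 := ℝ)
    have := (tendsto_const_nhds (x := (1:ℝ)) (f := atTop (α := ℕ))).add h0
    simpa using this
  have h2 := (ENNReal.continuous_ofReal.tendsto 1).comp h1
  simpa [Function.comp_def] using h2

private lemma shift_eventual {l : Filter ℝ} (u : ℝ → ℝ≥0∞) (v : ℝ → ℝ) {c : ℝ} (hc : 0 ≤ c)
    (hv : Tendsto v l atTop) (n : ℕ) :
    ∀ᶠ δ in l, u δ / ENNReal.ofReal (v δ) ≤
      ENNReal.ofReal (1 + 1/((n:ℝ)+1)) * (u δ / ENNReal.ofReal (v δ + c)) := by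
  have hn : (0:ℝ) < (n:ℝ)+1 := by positivity
  filter_upwards [hv.eventually_ge_atTop (((n:ℝ)+1) * c), hv.eventually_gt_atTop 0]
    with δ h1 h2
  have hk0 : ENNReal.ofReal (1 + 1/((n:ℝ)+1)) ≠ 0 := by
    rw [Ne, ENNReal.ofReal_eq_zero, not_le]
    positivity
  apply ennreal_div_le_mul_div hk0 ENNReal.ofReal_ne_top
  have h3 : c ≤ v δ / ((n:ℝ)+1) := (le_div_iff₀ hn).mpr (by linarith)
  have h4 : v δ + c ≤ (1 + 1/((n:ℝ)+1)) * v δ := by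
    have : (1 + 1/((n:ℝ)+1)) * v δ = v δ + v δ / ((n:ℝ)+1) := by ring
    linarith
  calc ENNReal.ofReal (v δ + c) ≤ ENNReal.ofReal ((1 + 1/((n:ℝ)+1)) * v δ) :=
        ENNReal.ofReal_le_ofReal h4
    _ = ENNReal.ofReal (1 + 1/((n:ℝ)+1)) * ENNReal.ofReal (v δ) :=
        ENNReal.ofReal_mul (by positivity)

private lemma limsup_shift {l : Filter ℝ} [l.NeBot] (u : ℝ → ℝ≥0∞) (v : ℝ → ℝ) {c : ℝ}
    (hc : 0 ≤ c) (hv : Tendsto v l atTop) :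
    limsup (fun δ => u δ / ENNReal.ofReal (v δ + c)) l
      = limsup (fun δ => u δ / ENNReal.ofReal (v δ)) l := by
  apply le_antisymm
  · exact limsup_le_limsup <| by
      filter_upwards [hv.eventually_ge_atTop 0] with δ hδ
      exact ENNReal.div_le_div_left (ENNReal.ofReal_le_ofReal (by linarith)) _
  · set S := limsup (fun δ => u δ / ENNReal.ofReal (v δ + c)) l with hSdef
    by_cases hS : S = ⊤
    · rw [hS]; exact le_top
    have key : ∀ n : ℕ, limsup (fun δ => u δ / ENNReal.ofReal (v δ)) l
        ≤ ENNReal.ofReal (1 + 1/((n:ℝ)+1)) * S := by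
      intro n
      calc limsup (fun δ => u δ / ENNReal.ofReal (v δ)) l
          ≤ limsup (fun δ => ENNReal.ofReal (1 + 1/((n:ℝ)+1)) *
              (u δ / ENNReal.ofReal (v δ + c))) l :=
            limsup_le_limsup (shift_eventual u v hc hv n)
        _ = ENNReal.ofReal (1 + 1/((n:ℝ)+1)) * S :=
            ENNReal.limsup_const_mul_of_ne_top ENNReal.ofReal_ne_top
    have hlim : Tendsto (fun n : ℕ => ENNReal.ofReal (1 + 1/((n:ℝ)+1)) * S) atTop (𝓝 S) := by
      have := ENNReal.Tendsto.mul_const tendsto_coeff (Or.inr hS)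
      simpa using this
    exact ge_of_tendsto' hlim key

private lemma liminf_shift {l : Filter ℝ} [l.NeBot] (u : ℝ → ℝ≥0∞) (v : ℝ → ℝ) {c : ℝ}
    (hc : 0 ≤ c) (hv : Tendsto v l atTop) :
    liminf (fun δ => u δ / ENNReal.ofReal (v δ + c)) l
      = liminf (fun δ => u δ / ENNReal.ofReal (v δ)) l := by
  apply le_antisymm
  · exact liminf_le_liminf <| by
      filter_upwards [hv.eventually_ge_atTop 0] with δ hδ
      exact ENNReal.div_le_div_left (ENNReal.ofReal_le_ofReal (by linarith)) _
  · set S := liminf (fun δ => u δ / ENNReal.ofReal (v δ + c)) l with hSdef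
    by_cases hS : S = ⊤
    · rw [hS]; exact le_top
    have key : ∀ n : ℕ, liminf (fun δ => u δ / ENNReal.ofReal (v δ)) l
        ≤ ENNReal.ofReal (1 + 1/((n:ℝ)+1)) * S := by
      intro n
      calc liminf (fun δ => u δ / ENNReal.ofReal (v δ)) l
          ≤ liminf (fun δ => ENNReal.ofReal (1 + 1/((n:ℝ)+1)) *
              (u δ / ENNReal.ofReal (v δ + c))) l :=
            liminf_le_liminf (shift_eventual u v hc hv n)
        _ = ENNReal.ofReal (1 + 1/((n:ℝ)+1)) * S := by
            apply ennreal_liminf_const_mul _ ENNReal.ofReal_ne_top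
            rw [Ne, ENNReal.ofReal_eq_zero, not_le]
            positivity
    have hlim : Tendsto (fun n : ℕ => ENNReal.ofReal (1 + 1/((n:ℝ)+1)) * S) atTop (𝓝 S) := by
      have := ENNReal.Tendsto.mul_const tendsto_coeff (Or.inr hS)
      simpa using this
    exact ge_of_tendsto' hlim key

private lemma tendsto_phi (hα0 : 0 < α) (hε0 : 0 < ε) :
    Tendsto (fun δ : ℝ => ε ^ (1-α) * δ ^ α) (𝓝[>] (0:ℝ)) (𝓝[>] (0:ℝ)) := by
  rw [tendsto_nhdsWithin_iff]
  constructor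
  · have h1 : Tendsto (fun δ : ℝ => δ ^ α) (𝓝 0) (𝓝 0) := by
      have := (Real.continuousAt_rpow_const 0 α (Or.inr hα0.le)).tendsto
      rwa [Real.zero_rpow hα0.ne'] at this
    have h2 : Tendsto (fun δ : ℝ => ε ^ (1-α) * δ ^ α) (𝓝 0) (𝓝 0) := by
      have := h1.const_mul (ε ^ (1-α))
      simpa using this
    exact h2.mono_left nhdsWithin_le_nhds
  · filter_upwards [self_mem_nhdsWithin] with δ (hδ : δ ∈ Set.Ioi (0:ℝ))
    have hδ' : (0:ℝ) < δ := hδ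
    have hb : (0:ℝ) < ε ^ (1-α) := Real.rpow_pos_of_pos hε0 _
    have hp : (0:ℝ) < δ ^ α := Real.rpow_pos_of_pos hδ' _
    exact mul_pos hb hp

private lemma tendsto_psi (hα0 : 0 < α) (hε0 : 0 < ε) :
    Tendsto (fun δ : ℝ => (δ / ε ^ (1-α)) ^ α⁻¹) (𝓝[>] (0:ℝ)) (𝓝[>] (0:ℝ)) := by
  have hb : (0:ℝ) < ε ^ (1-α) := Real.rpow_pos_of_pos hε0 _
  rw [tendsto_nhdsWithin_iff]
  constructor
  · have h0 : Tendsto (fun δ : ℝ => δ / ε ^ (1-α)) (𝓝 0) (𝓝 0) := by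
      have := (tendsto_id (x := 𝓝 (0:ℝ))).div_const (ε ^ (1-α))
      simpa using this
    have h1 : Tendsto (fun t : ℝ => t ^ α⁻¹) (𝓝 0) (𝓝 0) := by
      have := (Real.continuousAt_rpow_const 0 α⁻¹ (Or.inr (by positivity))).tendsto
      rwa [Real.zero_rpow (by positivity : α⁻¹ ≠ 0)] at this
    exact (h1.comp h0).mono_left nhdsWithin_le_nhds
  · filter_upwards [self_mem_nhdsWithin] with δ (hδ : δ ∈ Set.Ioi (0:ℝ))
    have hδ' : (0:ℝ) < δ := hδ
    exact Real.rpow_pos_of_pos (by positivity) _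

private lemma map_phi (hα0 : 0 < α) (hε0 : 0 < ε) :
    Filter.map (fun δ : ℝ => ε ^ (1-α) * δ ^ α) (𝓝[>] (0:ℝ)) = 𝓝[>] (0:ℝ) := by
  have hb : (0:ℝ) < ε ^ (1-α) := Real.rpow_pos_of_pos hε0 _
  apply le_antisymm (tendsto_phi hα0 hε0)
  have hcomp : (fun δ : ℝ => ε ^ (1-α) * δ ^ α) ∘ (fun δ : ℝ => (δ / ε ^ (1-α)) ^ α⁻¹)
      =ᶠ[𝓝[>] (0:ℝ)] id := by
    filter_upwards [self_mem_nhdsWithin] with δ (hδ : δ ∈ Set.Ioi (0:ℝ))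
    have hδ' : (0:ℝ) < δ := hδ
    show ε ^ (1-α) * ((δ / ε ^ (1-α)) ^ α⁻¹) ^ α = δ
    rw [Real.rpow_inv_rpow (by positivity) hα0.ne']
    field_simp
  calc 𝓝[>] (0:ℝ) = Filter.map ((fun δ : ℝ => ε ^ (1-α) * δ ^ α) ∘
        (fun δ : ℝ => (δ / ε ^ (1-α)) ^ α⁻¹)) (𝓝[>] (0:ℝ)) := by
        rw [Filter.map_congr hcomp, Filter.map_id]
    _ = Filter.map (fun δ : ℝ => ε ^ (1-α) * δ ^ α)
          (Filter.map (fun δ : ℝ => (δ / ε ^ (1-α)) ^ α⁻¹) (𝓝[>] (0:ℝ))) :=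
        (Filter.map_map).symm
    _ ≤ Filter.map (fun δ : ℝ => ε ^ (1-α) * δ ^ α) (𝓝[>] (0:ℝ)) :=
        Filter.map_mono (tendsto_psi hα0 hε0)

private lemma abs_log_phi (hα0 : 0 < α) (hα1 : α < 1) (hε0 : 0 < ε) (hε1 : ε < 1)
    {δ : ℝ} (hδ : δ ∈ Set.Ioo (0:ℝ) ε) :
    |Real.log (ε ^ (1-α) * δ ^ α)| = α * |Real.log δ| + (1-α) * |Real.log ε| := by
  obtain ⟨hδ0, hδε⟩ := hδ
  have hδ1 : δ < 1 := hδε.trans hε1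
  have hlogε : Real.log ε < 0 := Real.log_neg hε0 hε1
  have hlogδ : Real.log δ < 0 := Real.log_neg hδ0 hδ1
  have hmul : Real.log (ε ^ (1-α) * δ ^ α) = (1-α) * Real.log ε + α * Real.log δ := by
    rw [Real.log_mul (by positivity) (by positivity), Real.log_rpow hε0, Real.log_rpow hδ0]
  rw [hmul, abs_of_nonpos (by nlinarith), abs_of_nonpos hlogδ.le, abs_of_nonpos hlogε.le]
  ring

private lemma tendsto_alpha_abs_log (hα0 : 0 < α) :
    Tendsto (fun δ : ℝ => α * |Real.log δ|) (𝓝[>] (0:ℝ)) atTop := by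
  have h1 : Tendsto Real.log (𝓝[>] (0:ℝ)) atBot := Real.tendsto_log_nhdsGT_zero
  have h2 : Tendsto (fun δ : ℝ => |Real.log δ|) (𝓝[>] (0:ℝ)) atTop :=
    tendsto_abs_atBot_atTop.comp h1
  exact h2.const_mul_atTop hα0

private lemma transform_limsup (hα0 : 0 < α) (hα1 : α < 1) (hε0 : 0 < ε) (hε1 : ε < 1)
    (A : ℝ → ℝ≥0∞) :
    limsup (fun δ => A ((δ / ε ^ (1-α)) ^ α⁻¹) / ENNReal.ofReal |Real.log δ|) (𝓝[>] (0:ℝ))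
      = (limsup (fun δ => A δ / ENNReal.ofReal |Real.log δ|) (𝓝[>] (0:ℝ)))
          / ENNReal.ofReal α := by
  have hb : (0:ℝ) < ε ^ (1-α) := Real.rpow_pos_of_pos hε0 _
  have step1 : limsup (fun δ => A ((δ / ε ^ (1-α)) ^ α⁻¹) / ENNReal.ofReal |Real.log δ|)
      (𝓝[>] (0:ℝ))
      = limsup (fun δ => A δ /
          ENNReal.ofReal (α * |Real.log δ| + (1-α) * |Real.log ε|)) (𝓝[>] (0:ℝ)) := by
    conv_lhs => rw [← map_phi hα0 hε0]
    have : limsup (fun δ => A ((δ / ε ^ (1-α)) ^ α⁻¹) / ENNReal.ofReal |Real.log δ|)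
        (Filter.map (fun δ : ℝ => ε ^ (1-α) * δ ^ α) (𝓝[>] (0:ℝ)))
        = limsup ((fun δ => A ((δ / ε ^ (1-α)) ^ α⁻¹) / ENNReal.ofReal |Real.log δ|) ∘
            (fun δ : ℝ => ε ^ (1-α) * δ ^ α)) (𝓝[>] (0:ℝ)) := rfl
    rw [this]
    apply limsup_congr
    filter_upwards [Ioo_mem_nhdsGT_of_mem (Set.mem_Ico.mpr ⟨le_refl (0:ℝ), hε0⟩)] with δ hδ
    have hδ0 : (0:ℝ) < δ := hδ.1
    show A ((ε ^ (1-α) * δ ^ α / ε ^ (1-α)) ^ α⁻¹) /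
        ENNReal.ofReal |Real.log (ε ^ (1-α) * δ ^ α)| = _
    rw [mul_div_cancel_left₀ _ hb.ne', Real.rpow_rpow_inv hδ0.le hα0.ne',
      abs_log_phi hα0 hα1 hε0 hε1 hδ]
  rw [step1, limsup_shift (c := (1-α) * |Real.log ε|) A (fun δ => α * |Real.log δ|)
    (mul_nonneg (by linarith) (abs_nonneg _)) (tendsto_alpha_abs_log hα0)]
  have hk0 : ENNReal.ofReal α ≠ 0 := by
    rw [Ne, ENNReal.ofReal_eq_zero, not_le]; exact hα0
  have step2 : (fun δ => A δ / ENNReal.ofReal (α * |Real.log δ|))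
      = fun δ => (ENNReal.ofReal α)⁻¹ * (A δ / ENNReal.ofReal |Real.log δ|) := by
    funext δ
    rw [ENNReal.ofReal_mul hα0.le, div_eq_mul_inv,
      ENNReal.mul_inv (Or.inl hk0) (Or.inl ENNReal.ofReal_ne_top), div_eq_mul_inv]
    ring
  rw [step2, ENNReal.limsup_const_mul_of_ne_top (by simp [hk0]), ENNReal.div_eq_inv_mul]

private lemma transform_liminf (hα0 : 0 < α) (hα1 : α < 1) (hε0 : 0 < ε) (hε1 : ε < 1)
    (A : ℝ → ℝ≥0∞) :
    liminf (fun δ => A ((δ / ε ^ (1-α)) ^ α⁻¹) / ENNReal.ofReal |Real.log δ|) (𝓝[>] (0:ℝ))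
      = (liminf (fun δ => A δ / ENNReal.ofReal |Real.log δ|) (𝓝[>] (0:ℝ)))
          / ENNReal.ofReal α := by
  have hb : (0:ℝ) < ε ^ (1-α) := Real.rpow_pos_of_pos hε0 _
  have step1 : liminf (fun δ => A ((δ / ε ^ (1-α)) ^ α⁻¹) / ENNReal.ofReal |Real.log δ|)
      (𝓝[>] (0:ℝ))
      = liminf (fun δ => A δ /
          ENNReal.ofReal (α * |Real.log δ| + (1-α) * |Real.log ε|)) (𝓝[>] (0:ℝ)) := by
    conv_lhs => rw [← map_phi hα0 hε0]
    have : liminf (fun δ => A ((δ / ε ^ (1-α)) ^ α⁻¹) / ENNReal.ofReal |Real.log δ|)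
        (Filter.map (fun δ : ℝ => ε ^ (1-α) * δ ^ α) (𝓝[>] (0:ℝ)))
        = liminf ((fun δ => A ((δ / ε ^ (1-α)) ^ α⁻¹) / ENNReal.ofReal |Real.log δ|) ∘
            (fun δ : ℝ => ε ^ (1-α) * δ ^ α)) (𝓝[>] (0:ℝ)) := rfl
    rw [this]
    apply liminf_congr
    filter_upwards [Ioo_mem_nhdsGT_of_mem (Set.mem_Ico.mpr ⟨le_refl (0:ℝ), hε0⟩)] with δ hδ
    have hδ0 : (0:ℝ) < δ := hδ.1
    show A ((ε ^ (1-α) * δ ^ α / ε ^ (1-α)) ^ α⁻¹) /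
        ENNReal.ofReal |Real.log (ε ^ (1-α) * δ ^ α)| = _
    rw [mul_div_cancel_left₀ _ hb.ne', Real.rpow_rpow_inv hδ0.le hα0.ne',
      abs_log_phi hα0 hα1 hε0 hε1 hδ]
  rw [step1, liminf_shift (c := (1-α) * |Real.log ε|) A (fun δ => α * |Real.log δ|)
    (mul_nonneg (by linarith) (abs_nonneg _)) (tendsto_alpha_abs_log hα0)]
  have hk0 : ENNReal.ofReal α ≠ 0 := by
    rw [Ne, ENNReal.ofReal_eq_zero, not_le]; exact hα0
  have step2 : (fun δ => A δ / ENNReal.ofReal (α * |Real.log δ|))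
      = fun δ => (ENNReal.ofReal α)⁻¹ * (A δ / ENNReal.ofReal |Real.log δ|) := by
    funext δ
    rw [ENNReal.ofReal_mul hα0.le, div_eq_mul_inv,
      ENNReal.mul_inv (Or.inl hk0) (Or.inl ENNReal.ofReal_ne_top), div_eq_mul_inv]
    ring
  rw [step2, ennreal_liminf_const_mul (by simp [hk0]) (by simp [hk0]),
    ENNReal.div_eq_inv_mul]

private lemma dynDist_dAE_le_iff {G X : Type*} (T : G → X → X) (d : X → X → ℝ)
    (hd0 : ∀ x y, 0 ≤ d x y) (hα0 : 0 < α) (hε0 : 0 < ε) {F : Finset G} (hF : F.Nonempty)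
    {δ : ℝ} (hδ0 : 0 < δ) (hδε : δ < ε) (x y : X) :
    dynDist T (dAlphaEps d α ε) F x y ≤ δ ↔
      dynDist T d F x y ≤ (δ / ε ^ (1-α)) ^ α⁻¹ := by
  unfold dynDist
  rw [dif_pos hF, dif_pos hF, Finset.sup'_le_iff, Finset.sup'_le_iff]
  exact forall₂_congr fun g hg => F_le_iff hα0 hε0 (hd0 _ _) hδ0 hδε

private lemma spanNum_dAE {G X : Type*} (T : G → X → X) (d : X → X → ℝ)
    (hd0 : ∀ x y, 0 ≤ d x y) (hα0 : 0 < α) (hε0 : 0 < ε) {F : Finset G} (hF : F.Nonempty)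
    {δ : ℝ} (hδ0 : 0 < δ) (hδε : δ < ε) (E : Set X) :
    spanNum T (dAlphaEps d α ε) F δ E = spanNum T d F ((δ / ε ^ (1-α)) ^ α⁻¹) E := by
  unfold spanNum
  congr 1
  ext n
  refine exists_congr fun K => and_congr_left fun _ => and_congr_right fun _ => ?_
  exact forall₂_congr fun x hx => exists_congr fun y => and_congr_right fun _ =>
    dynDist_dAE_le_iff T d hd0 hα0 hε0 hF hδ0 hδε x y

end Dyn

/-- for all `α, ε ∈ (0,1)`, `d_{α,ε}` is a compatible metric with
`D(d,d_{α,ε}) < 2ε` and upper/lower metric mean dimension equal to that of `d`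
divided by `α`. -/
theorem dAlphaEps_properties {G X : Type*} [Group G] [Countable G]
    [TopologicalSpace X] [CompactSpace X]
    (T : G → X → X) (hT : IsContAction T)
    (Fs : ℕ → Finset G) (hFol : IsFolner Fs)
    (d : X → X → ℝ) (hd : IsMetricOn d) (hc : InducesTopology d)
    (α ε : ℝ) (hα : α ∈ Set.Ioo (0 : ℝ) 1) (hε : ε ∈ Set.Ioo (0 : ℝ) 1) :
    IsMetricOn (dAlphaEps d α ε) ∧
    InducesTopology (dAlphaEps d α ε) ∧
    metrD d (dAlphaEps d α ε) < 2 * ε ∧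
    mdimMUpper T (dAlphaEps d α ε) Fs (Set.univ : Set X)
      = mdimMUpper T d Fs (Set.univ : Set X) / ENNReal.ofReal α ∧
    mdimMLower T (dAlphaEps d α ε) Fs (Set.univ : Set X)
      = mdimMLower T d Fs (Set.univ : Set X) / ENNReal.ofReal α := by
  obtain ⟨hα0, hα1⟩ := hα
  obtain ⟨hε0, hε1⟩ := hε
  have hd0 := hd.1
  have hFne : ∀ n, (Fs n).Nonempty := hFol.1
  have hev : (fun δ : ℝ => (limsup (fun n =>
        ENNReal.ofReal (Real.log (spanNum T (dAlphaEps d α ε) (Fs n) δ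
          (Set.univ : Set X) : ℝ) / ((Fs n).card : ℝ))) atTop)
      / ENNReal.ofReal |Real.log δ|) =ᶠ[𝓝[>] (0:ℝ)]
      (fun δ : ℝ => (limsup (fun n =>
        ENNReal.ofReal (Real.log (spanNum T d (Fs n) ((δ / ε ^ (1-α)) ^ α⁻¹)
          (Set.univ : Set X) : ℝ) / ((Fs n).card : ℝ))) atTop)
      / ENNReal.ofReal |Real.log δ|) := by
    filter_upwards [Ioo_mem_nhdsGT_of_mem (Set.mem_Ico.mpr ⟨le_refl (0:ℝ), hε0⟩)] with δ hδ
    have hspan : ∀ n, spanNum T (dAlphaEps d α ε) (Fs n) δ (Set.univ : Set X)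
        = spanNum T d (Fs n) ((δ / ε ^ (1-α)) ^ α⁻¹) (Set.univ : Set X) :=
      fun n => spanNum_dAE T d hd0 hα0 hε0 (hFne n) hδ.1 hδ.2 _
    simp only [hspan]
  refine ⟨dAE_isMetric d hd ⟨hα0, hα1⟩ ⟨hε0, hε1⟩,
    dAE_inducesTopology d hd hc ⟨hα0, hα1⟩ ⟨hε0, hε1⟩,
    dAE_metrD d hd ⟨hα0, hα1⟩ ⟨hε0, hε1⟩, ?_, ?_⟩
  · unfold mdimMUpper
    rw [limsup_congr hev]
    exact transform_limsup hα0 hα1 hε0 hε1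
      (fun δ' => limsup (fun n => ENNReal.ofReal (Real.log
        (spanNum T d (Fs n) δ' (Set.univ : Set X) : ℝ) / ((Fs n).card : ℝ))) atTop)
  · unfold mdimMLower
    rw [liminf_congr hev]
    exact transform_liminf hα0 hα1 hε0 hε1
      (fun δ' => limsup (fun n => ENNReal.ofReal (Real.log
        (spanNum T d (Fs n) δ' (Set.univ : Set X) : ℝ) / ((Fs n).card : ℝ))) atTop)

end MeanDim13
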